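/- Let G = G(Z_1, …, Z_L) be the graph defined from the matrices Z_1, …, Z_L. Then: (i) the maximum (s,t)-flow value of G equals 2r; and (ii) for every k ∈ {1, …, L} and i, j ∈ {1, …, r}, setting e_1 = (x_{k,i}, x_{k+1,i}) and e_2 = (y_{k−1,j}, y_{k,j}) (with the stated boundary conventions), the maximum (s,t)-flow value of G − {e_1, e_2} equals 2r − 1 if Z_k[i,j] = 1 and equals 2r − 2 if Z_k[i,j] = 0. -/

import Mathlib

open Finset

/-- A finite directed multigraph on vertex type `V` with edge type `E`:
each edge `e` has a source `src e` and a target `tgt e`. -/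
structure Digraph' (V E : Type) where
  src : E → V
  tgt : E → V

namespace Digraph'

variable {V E : Type} [Fintype V] [DecidableEq V] [Fintype E] [DecidableEq E]

/-- `h : E → ℕ` satisfies flow conservation at every vertex other than `s` and `t`:
the sum over incoming edges equals the sum over outgoing edges. -/
def Conserves (G : Digraph' V E) (s t : V) (h : E → ℕ) : Prop :=
  ∀ v : V, v ≠ s → v ≠ t →
    ∑ e ∈ univ.filter (fun e => G.tgt e = v), h e =
      ∑ e ∈ univ.filter (fun e => G.src e = v), h e

/-- The value of `h`: the net flow out of `s`. -/
def flowValue (G : Digraph' V E) (s : V) (h : E → ℕ) : ℤ :=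
  (∑ e ∈ univ.filter (fun e => G.src e = s), (h e : ℤ)) -
    ∑ e ∈ univ.filter (fun e => G.tgt e = s), (h e : ℤ)

/-- An `(s,t)`-flow of a unit-capacity digraph: a `{0,1}`-valued function on edges
satisfying flow conservation at every vertex other than `s` and `t`. -/
def IsFlow (G : Digraph' V E) (s t : V) (f : E → ℕ) : Prop :=
  (∀ e, f e ≤ 1) ∧ G.Conserves s t f

/-- One step along an edge not belonging to `F`. -/
def stepAvoid (G : Digraph' V E) (F : Finset E) (u v : V) : Prop :=
  ∃ e, e ∉ F ∧ G.src e = u ∧ G.tgt e = v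

/-- Reachability by a directed path using no edge of `F`. -/
def ReachAvoid (G : Digraph' V E) (F : Finset E) : V → V → Prop :=
  Relation.ReflTransGen (G.stepAvoid F)

/-- `C` is an `(s,t)`-cut: after deleting the edges of `C` there is no directed
path from `s` to `t`. -/
def IsCut (G : Digraph' V E) (s t : V) (C : Finset E) : Prop :=
  ¬ G.ReachAvoid C s t

/-- An `(s,t)`-min-cut: an `(s,t)`-cut of minimum cardinality. -/
def IsMinCut (G : Digraph' V E) (s t : V) (C : Finset E) : Prop :=
  G.IsCut s t C ∧ ∀ C' : Finset E, G.IsCut s t C' → C.card ≤ C'.card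

/-- A minimal `(s,t)`-cut: no proper subset of it is an `(s,t)`-cut. -/
def IsMinimalCut (G : Digraph' V E) (s t : V) (C : Finset E) : Prop :=
  G.IsCut s t C ∧ ∀ C' : Finset E, C' ⊂ C → ¬ G.IsCut s t C'

/-- An edge is critical if it belongs to some `(s,t)`-min-cut. -/
def Critical (G : Digraph' V E) (s t : V) (e : E) : Prop :=
  ∃ C : Finset E, G.IsMinCut s t C ∧ e ∈ C

/-- `m` is the maximum `(s,t)`-flow value of `G − F`, i.e. the largest value of an
`(s,t)`-flow of `G` vanishing on every edge of `F`. -/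
def IsMaxFlowValue (G : Digraph' V E) (s t : V) (F : Finset E) (m : ℤ) : Prop :=
  (∃ f, G.IsFlow s t f ∧ (∀ e ∈ F, f e = 0) ∧ G.flowValue s f = m) ∧
    ∀ f, G.IsFlow s t f → (∀ e ∈ F, f e = 0) → G.flowValue s f ≤ m

/-- The residual graph `G_f` of a `{0,1}`-flow `f`: each edge with `f e = 1`
is reversed, each edge with `f e = 0` is kept as is. -/
def residual (G : Digraph' V E) (f : E → ℕ) : Digraph' V E where
  src e := if f e = 1 then G.tgt e else G.src e
  tgt e := if f e = 1 then G.src e else G.tgt e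

end Digraph'

/-- Vertices of the lower-bound graph `G(Z_1,…,Z_L)`: a source `s`, a sink `t`, and
vertices `x k i`, `y k i` (for paper indices `k+1 ∈ {1,…,L}`, `i+1 ∈ {1,…,r}`). -/
inductive Vtx (L r : ℕ) : Type where
  | s : Vtx L r
  | t : Vtx L r
  | x : Fin L → Fin r → Vtx L r
  | y : Fin L → Fin r → Vtx L r
deriving DecidableEq, Fintype

/-- The vertex `x_{k,i}` with boundary convention `x_{0,i} = s`, `x_{L+1,i} = t`;
here `k` ranges over `0,…,L+1`. -/
def xAt (L r : ℕ) (k : ℕ) (i : Fin r) : Vtx L r :=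
  if k = 0 then .s else if h : k - 1 < L then .x ⟨k - 1, h⟩ i else .t

/-- The vertex `y_{k,i}` with boundary convention `y_{0,i} = s`, `y_{L+1,i} = t`. -/
def yAt (L r : ℕ) (k : ℕ) (i : Fin r) : Vtx L r :=
  if k = 0 then .s else if h : k - 1 < L then .y ⟨k - 1, h⟩ i else .t

/-- Potential edges of `G(Z_1,…,Z_L)`: the path edges `(x_{k,i}, x_{k+1,i})` and
`(y_{k,i}, y_{k+1,i})` for `0 ≤ k ≤ L`, and cross edges `(x_{k,i}, y_{k,j})`. -/
inductive Edg (L r : ℕ) : Type where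
  | ex : Fin (L + 1) → Fin r → Edg L r
  | ey : Fin (L + 1) → Fin r → Edg L r
  | cross : Fin L → Fin r → Fin r → Edg L r
deriving DecidableEq, Fintype

/-- A potential edge is a real edge iff it is a path edge, or a cross edge
`(x_{k,i}, y_{k,j})` with `Z_k[i,j] = 1`. -/
def validEdge {L r : ℕ} (Z : Fin L → Fin r → Fin r → Bool) : Edg L r → Bool
  | .cross k i j => Z k i j
  | _ => true

/-- The graph `G(Z_1,…,Z_L)` from the lower-bound construction. -/
def matrixGraph {L r : ℕ} (Z : Fin L → Fin r → Fin r → Bool) :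
    Digraph' (Vtx L r) {e : Edg L r // validEdge Z e = true} where
  src e := match e.1 with
    | .ex k i => xAt L r k.val i
    | .ey k i => yAt L r k.val i
    | .cross k i _ => Vtx.x k i
  tgt e := match e.1 with
    | .ex k i => xAt L r (k.val + 1) i
    | .ey k i => yAt L r (k.val + 1) i
    | .cross k _ j => Vtx.y k j


section Aux
open Finset

namespace Digraph'
variable {V E : Type} [Fintype V] [DecidableEq V] [Fintype E] [DecidableEq E]

lemma cut_value (G : Digraph' V E) (s t : V) (f : E → ℕ) (hf : G.Conserves s t f)
    (P : V → Bool) (hs : P s = true) (ht : P t = false) :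
    G.flowValue s f =
      (∑ e ∈ univ.filter (fun e => P (G.src e) = true ∧ P (G.tgt e) = false), (f e : ℤ)) -
        ∑ e ∈ univ.filter (fun e => P (G.src e) = false ∧ P (G.tgt e) = true), (f e : ℤ) := by
  have step1 : G.flowValue s f =
      ∑ v ∈ univ.filter (fun v => P v = true),
        ((∑ e ∈ univ.filter (fun e => G.src e = v), (f e : ℤ)) -
          ∑ e ∈ univ.filter (fun e => G.tgt e = v), (f e : ℤ)) := by
    rw [Finset.sum_eq_single s]
    · rfl
    · intro v hv hvs
      have hvt : v ≠ t := by
        intro h; subst h; simp [ht] at hv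
      have h2 := hf v hvs hvt
      have : (∑ e ∈ univ.filter (fun e => G.tgt e = v), (f e : ℤ)) =
          ∑ e ∈ univ.filter (fun e => G.src e = v), (f e : ℤ) := by
        exact_mod_cast congrArg (Nat.cast : ℕ → ℤ) h2
      omega
    · intro h
      exact absurd (by simp [hs]) h
  rw [step1, Finset.sum_sub_distrib]
  have hsrc : (∑ v ∈ univ.filter (fun v => P v = true),
      ∑ e ∈ univ.filter (fun e => G.src e = v), (f e : ℤ)) =
      ∑ e ∈ univ.filter (fun e => P (G.src e) = true), (f e : ℤ) := by
    rw [Finset.sum_fiberwise_eq_sum_filter]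
    apply Finset.sum_congr _ (fun _ _ => rfl)
    ext e; simp
  have htgt : (∑ v ∈ univ.filter (fun v => P v = true),
      ∑ e ∈ univ.filter (fun e => G.tgt e = v), (f e : ℤ)) =
      ∑ e ∈ univ.filter (fun e => P (G.tgt e) = true), (f e : ℤ) := by
    rw [Finset.sum_fiberwise_eq_sum_filter]
    apply Finset.sum_congr _ (fun _ _ => rfl)
    ext e; simp
  rw [hsrc, htgt]
  have split1 : (∑ e ∈ univ.filter (fun e => P (G.src e) = true), (f e : ℤ)) =
      (∑ e ∈ univ.filter (fun e => P (G.src e) = true ∧ P (G.tgt e) = true), (f e : ℤ)) +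
      ∑ e ∈ univ.filter (fun e => P (G.src e) = true ∧ P (G.tgt e) = false), (f e : ℤ) := by
    rw [← Finset.sum_filter_add_sum_filter_not (univ.filter (fun e => P (G.src e) = true))
      (fun e => P (G.tgt e) = true)]
    rw [Finset.filter_filter, Finset.filter_filter]
    congr 1
    apply Finset.sum_congr _ (fun _ _ => rfl)
    ext e; simp
  have split2 : (∑ e ∈ univ.filter (fun e => P (G.tgt e) = true), (f e : ℤ)) =
      (∑ e ∈ univ.filter (fun e => P (G.src e) = true ∧ P (G.tgt e) = true), (f e : ℤ)) +
      ∑ e ∈ univ.filter (fun e => P (G.src e) = false ∧ P (G.tgt e) = true), (f e : ℤ) := by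
    rw [← Finset.sum_filter_add_sum_filter_not (univ.filter (fun e => P (G.tgt e) = true))
      (fun e => P (G.src e) = true)]
    rw [Finset.filter_filter, Finset.filter_filter]
    congr 1
    · apply Finset.sum_congr _ (fun _ _ => rfl); ext e; simp [and_comm]
    · apply Finset.sum_congr _ (fun _ _ => rfl); ext e; simp [and_comm]
  rw [split1, split2]
  ring

lemma flow_le_cut (G : Digraph' V E) (s t : V) (f : E → ℕ) (hf : G.IsFlow s t f)
    (F : Finset E) (hF : ∀ e ∈ F, f e = 0)
    (P : V → Bool) (hs : P s = true) (ht : P t = false)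
    (T : Finset E)
    (hT : ∀ e, P (G.src e) = true → P (G.tgt e) = false → e ∉ F → e ∈ T) :
    G.flowValue s f ≤ T.card := by
  rw [cut_value G s t f hf.2 P hs ht]
  have h1 : (∑ e ∈ univ.filter (fun e => P (G.src e) = true ∧ P (G.tgt e) = false), (f e : ℤ))
      ≤ T.card := by
    calc (∑ e ∈ univ.filter (fun e => P (G.src e) = true ∧ P (G.tgt e) = false), (f e : ℤ))
        = ∑ e ∈ (univ.filter (fun e => P (G.src e) = true ∧ P (G.tgt e) = false)) \ F,
            (f e : ℤ) := by
          refine (Finset.sum_subset Finset.sdiff_subset (fun x hx hx2 => ?_)).symm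
          have : x ∈ F := by
            by_contra hxF
            exact hx2 (Finset.mem_sdiff.mpr ⟨hx, hxF⟩)
          simp [hF x this]
      _ ≤ ∑ e ∈ (univ.filter (fun e => P (G.src e) = true ∧ P (G.tgt e) = false)) \ F, (1 : ℤ) :=
          Finset.sum_le_sum (fun e _ => by exact_mod_cast hf.1 e)
      _ = ((univ.filter (fun e => P (G.src e) = true ∧ P (G.tgt e) = false)) \ F).card := by simp
      _ ≤ T.card := by
          apply Nat.cast_le.mpr
          apply Finset.card_le_card
          intro e he
          rw [Finset.mem_sdiff, Finset.mem_filter] at he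
          exact hT e he.1.2.1 he.1.2.2 he.2
  have h2 : (0:ℤ) ≤
      ∑ e ∈ univ.filter (fun e => P (G.src e) = false ∧ P (G.tgt e) = true), (f e : ℤ) :=
    Finset.sum_nonneg (fun e _ => Int.natCast_nonneg _)
  omega

end Digraph'

section XYAt
variable {L r : ℕ} {m : ℕ} {v i : Fin r} {a : Fin L}

@[simp] lemma xAt_eq_s : xAt L r m v = Vtx.s ↔ m = 0 := by
  unfold xAt; split
  · simp_all
  · split <;> simp_all
@[simp] lemma xAt_eq_t : xAt L r m v = Vtx.t ↔ L + 1 ≤ m := by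
  unfold xAt; split
  · simp_all <;> omega
  · split <;> simp_all <;> omega
@[simp] lemma xAt_eq_x : xAt L r m v = Vtx.x a i ↔ (m = a.val + 1 ∧ v = i) := by
  unfold xAt; split
  · simp_all <;> omega
  · split
    · simp_all [Fin.ext_iff]; omega
    · simp; intro h; omega
@[simp] lemma xAt_eq_y {j : Fin r} : ¬ (xAt L r m v = Vtx.y a j) := by
  unfold xAt; split
  · simp
  · split <;> simp
@[simp] lemma yAt_eq_s : yAt L r m v = Vtx.s ↔ m = 0 := by
  unfold yAt; split
  · simp_all
  · split <;> simp_all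
@[simp] lemma yAt_eq_t : yAt L r m v = Vtx.t ↔ L + 1 ≤ m := by
  unfold yAt; split
  · simp_all <;> omega
  · split <;> simp_all <;> omega
@[simp] lemma yAt_eq_y : yAt L r m v = Vtx.y a i ↔ (m = a.val + 1 ∧ v = i) := by
  unfold yAt; split
  · simp_all <;> omega
  · split
    · simp_all [Fin.ext_iff]; omega
    · simp; intro h; omega
@[simp] lemma yAt_eq_x {j : Fin r} : ¬ (yAt L r m v = Vtx.x a j) := by
  unfold yAt; split
  · simp
  · split <;> simp
end XYAt

section GraphAux
open Finset
variable {L r : ℕ} (Z : Fin L → Fin r → Fin r → Bool)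

/-- Source of a potential edge. -/
def src0 : Edg L r → Vtx L r
  | .ex k i => xAt L r k.val i
  | .ey k i => yAt L r k.val i
  | .cross k i _ => Vtx.x k i

/-- Target of a potential edge. -/
def tgt0 : Edg L r → Vtx L r
  | .ex k i => xAt L r (k.val + 1) i
  | .ey k i => yAt L r (k.val + 1) i
  | .cross k _ j => Vtx.y k j

lemma mg_src : (matrixGraph Z).src = fun e => src0 e.1 := by
  funext e; rcases e with ⟨e0, h⟩; cases e0 <;> rfl

lemma mg_tgt : (matrixGraph Z).tgt = fun e => tgt0 e.1 := by
  funext e; rcases e with ⟨e0, h⟩; cases e0 <;> rfl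

/-- The obvious equivalence enumerating `Edg L r`. -/
def edgEquiv :
    ((Fin (L+1) × Fin r) ⊕ (Fin (L+1) × Fin r) ⊕ (Fin L × Fin r × Fin r)) ≃ Edg L r where
  toFun := fun x => match x with
    | .inl (m, i) => .ex m i
    | .inr (.inl (m, i)) => .ey m i
    | .inr (.inr (m, i, j)) => .cross m i j
  invFun := fun e => match e with
    | .ex m i => .inl (m, i)
    | .ey m i => .inr (.inl (m, i))
    | .cross m i j => .inr (.inr (m, i, j))
  left_inv := by rintro (⟨m, i⟩ | ⟨m, i⟩ | ⟨m, i, j⟩) <;> rfl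
  right_inv := by rintro (e | e | e) <;> rfl

lemma sum_edg {M : Type} [AddCommMonoid M] (g : Edg L r → M) :
    ∑ e : Edg L r, g e =
      (∑ m : Fin (L+1), ∑ i : Fin r, g (.ex m i)) +
      ((∑ m : Fin (L+1), ∑ i : Fin r, g (.ey m i)) +
      ∑ m : Fin L, ∑ i : Fin r, ∑ j : Fin r, g (.cross m i j)) := by
  rw [← Equiv.sum_comp (edgEquiv (L := L) (r := r)) g]
  rw [Fintype.sum_sum_type, Fintype.sum_sum_type]
  congr 1
  · rw [Fintype.sum_prod_type]; rfl
  congr 1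
  · rw [Fintype.sum_prod_type]; rfl
  · rw [Fintype.sum_prod_type]
    apply Finset.sum_congr rfl
    intro m _
    rw [Fintype.sum_prod_type]; rfl

/-- Master sum lemma: sums over a filter of the valid-edge subtype split
into three explicit families. -/
lemma sumE {M : Type} [AddCommMonoid M] (q : Edg L r → Prop) [DecidablePred q]
    (g : Edg L r → M) :
    (∑ e ∈ (univ : Finset {e : Edg L r // validEdge Z e = true}).filter (fun e => q e.1),
        g e.1) =
      (∑ m : Fin (L+1), ∑ i : Fin r, if q (.ex m i) then g (.ex m i) else 0) +
      ((∑ m : Fin (L+1), ∑ i : Fin r, if q (.ey m i) then g (.ey m i) else 0) +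
      ∑ m : Fin L, ∑ i : Fin r, ∑ j : Fin r,
        if Z m i j = true ∧ q (.cross m i j) then g (.cross m i j) else 0) := by
  rw [Finset.sum_filter]
  rw [← Finset.sum_subtype (univ.filter (fun e : Edg L r => validEdge Z e = true))
    (by simp) (fun e => if q e then g e else 0)]
  rw [Finset.sum_filter, sum_edg]
  simp [validEdge, ite_and]
  rfl

lemma sum_src {M : Type} [AddCommMonoid M] (v : Vtx L r) (g : Edg L r → M) :
    (∑ e ∈ (univ : Finset {e : Edg L r // validEdge Z e = true}).filter
        (fun e => (matrixGraph Z).src e = v), g e.1) =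
      (∑ m : Fin (L+1), ∑ i : Fin r, if xAt L r m.val i = v then g (.ex m i) else 0) +
      ((∑ m : Fin (L+1), ∑ i : Fin r, if yAt L r m.val i = v then g (.ey m i) else 0) +
      ∑ m : Fin L, ∑ i : Fin r, ∑ j : Fin r,
        if Z m i j = true ∧ Vtx.x m i = v then g (.cross m i j) else 0) := by
  simp only [mg_src]
  exact sumE Z (fun e0 => src0 e0 = v) g

lemma sum_tgt {M : Type} [AddCommMonoid M] (v : Vtx L r) (g : Edg L r → M) :
    (∑ e ∈ (univ : Finset {e : Edg L r // validEdge Z e = true}).filter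
        (fun e => (matrixGraph Z).tgt e = v), g e.1) =
      (∑ m : Fin (L+1), ∑ i : Fin r, if xAt L r (m.val + 1) i = v then g (.ex m i) else 0) +
      ((∑ m : Fin (L+1), ∑ i : Fin r, if yAt L r (m.val + 1) i = v then g (.ey m i) else 0) +
      ∑ m : Fin L, ∑ i : Fin r, ∑ j : Fin r,
        if Z m i j = true ∧ Vtx.y m j = v then g (.cross m i j) else 0) := by
  simp only [mg_tgt]
  exact sumE Z (fun e0 => tgt0 e0 = v) g

end GraphAux

section Collapse
open Finset
variable {M : Type} [AddCommMonoid M]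

lemma sum2_single {n1 n2 : ℕ} (h : Fin n1 → Fin n2 → M) (c : Fin n1) (d : Fin n2)
    (hz : ∀ m i, ¬ (m = c ∧ i = d) → h m i = 0) :
    (∑ m : Fin n1, ∑ i : Fin n2, h m i) = h c d := by
  rw [Finset.sum_eq_single c]
  · rw [Finset.sum_eq_single d]
    · intro b _ hb; exact hz c b (by tauto)
    · intro hd; exact absurd (mem_univ d) hd
  · intro b _ hb; exact Finset.sum_eq_zero (fun c' _ => hz b c' (by tauto))
  · intro hc; exact absurd (mem_univ c) hc

lemma sum2_row {n1 n2 : ℕ} (h : Fin n1 → Fin n2 → M) (c : Fin n1)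
    (hz : ∀ m i, m ≠ c → h m i = 0) :
    (∑ m : Fin n1, ∑ i : Fin n2, h m i) = ∑ i : Fin n2, h c i := by
  rw [Finset.sum_eq_single c]
  · intro b _ hb; exact Finset.sum_eq_zero (fun c' _ => hz b c' hb)
  · intro hc; exact absurd (mem_univ c) hc

lemma sum2_zero {n1 n2 : ℕ} (h : Fin n1 → Fin n2 → M)
    (hz : ∀ m i, h m i = 0) :
    (∑ m : Fin n1, ∑ i : Fin n2, h m i) = 0 :=
  Finset.sum_eq_zero (fun m _ => Finset.sum_eq_zero (fun i _ => hz m i))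

lemma sum3_single {n1 n2 n3 : ℕ} (h : Fin n1 → Fin n2 → Fin n3 → M)
    (c : Fin n1) (d : Fin n2) (e : Fin n3)
    (hz : ∀ m i j, ¬ (m = c ∧ i = d ∧ j = e) → h m i j = 0) :
    (∑ m : Fin n1, ∑ i : Fin n2, ∑ j : Fin n3, h m i j) = h c d e := by
  rw [sum2_row (fun m i => ∑ j, h m i j) c
    (fun m i hm => Finset.sum_eq_zero (fun j _ => hz m i j (by tauto)))]
  rw [Finset.sum_eq_single d]
  · rw [Finset.sum_eq_single e]
    · intro b _ hb; exact hz c d b (by tauto)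
    · intro hd; exact absurd (mem_univ e) hd
  · intro b _ hb; exact Finset.sum_eq_zero (fun j _ => hz c b j (by tauto))
  · intro hc; exact absurd (mem_univ d) hc

lemma sum3_zero {n1 n2 n3 : ℕ} (h : Fin n1 → Fin n2 → Fin n3 → M)
    (hz : ∀ m i j, h m i j = 0) :
    (∑ m : Fin n1, ∑ i : Fin n2, ∑ j : Fin n3, h m i j) = 0 :=
  Finset.sum_eq_zero (fun m _ => Finset.sum_eq_zero (fun i _ =>
    Finset.sum_eq_zero (fun j _ => hz m i j)))

end Collapse

end Aux


section Flows
open Finset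
variable {L r : ℕ} (Z : Fin L → Fin r → Fin r → Bool)

@[simp] lemma val_eq_castSucc {m : Fin (L+1)} {a : Fin L} : m.val = a.val ↔ m = a.castSucc := by
  rw [Fin.ext_iff]; rfl

@[simp] lemma val_eq_succ {m : Fin (L+1)} {a : Fin L} : m.val = a.val + 1 ↔ m = a.succ := by
  rw [Fin.ext_iff]; rfl

@[simp] lemma fin_val_eq_zero {m : Fin (L+1)} : m.val = 0 ↔ m = 0 := by
  rw [Fin.ext_iff]; rfl

/-- The full flow: one unit along each of the `2r` paths. -/
def f1 : Edg L r → ℕ := fun e => match e with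
  | .cross _ _ _ => 0
  | _ => 1

lemma f1_conserves : (matrixGraph Z).Conserves Vtx.s Vtx.t (fun e => f1 e.1) := by
  intro v hvs hvt
  cases v with
  | s => exact absurd rfl hvs
  | t => exact absurd rfl hvt
  | x a i' =>
    rw [sum_tgt Z (Vtx.x a i') f1, sum_src Z (Vtx.x a i') f1]
    simp [f1, ite_and]
  | y a j' =>
    rw [sum_tgt Z (Vtx.y a j') f1, sum_src Z (Vtx.y a j') f1]
    simp [f1, ite_and]


lemma f1_le (e : {e : Edg L r // validEdge Z e = true}) : f1 e.1 ≤ 1 := by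
  rcases e with ⟨e0, h⟩; cases e0 <;> simp [f1]

lemma f1_value : (matrixGraph Z).flowValue Vtx.s (fun e => f1 e.1) = 2 * r := by
  unfold Digraph'.flowValue
  rw [sum_src Z Vtx.s (fun e0 => (f1 e0 : ℤ)), sum_tgt Z Vtx.s (fun e0 => (f1 e0 : ℤ))]
  simp [f1, ite_and]
  ring

lemma sum_ite_ne {n : ℕ} (c : Fin n) : (∑ x : Fin n, if x = c then (0:ℤ) else 1) = n - 1 := by
  have h : (∑ x : Fin n, if x = c then (0:ℤ) else 1)
      = ∑ x : Fin n, ((1:ℤ) - if x = c then 1 else 0) := by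
    apply Finset.sum_congr rfl; intro x _; split_ifs <;> ring
  rw [h, Finset.sum_sub_distrib]
  simp

/-- The flow for part (ii) when `Z k i j = 1`. -/
def fZ1 (k : Fin L) (i j : Fin r) : Edg L r → ℕ := fun e => match e with
  | .ex m i' => if i' = i ∧ k.val < m.val then 0 else 1
  | .ey m j' => if j' = j ∧ m.val ≤ k.val then 0 else 1
  | .cross m i' j' => if m = k ∧ i' = i ∧ j' = j then 1 else 0

/-- The flow for part (ii) when `Z k i j = 0`. -/
def fZ0 (i j : Fin r) : Edg L r → ℕ := fun e => match e with
  | .ex _ i' => if i' = i then 0 else 1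
  | .ey _ j' => if j' = j then 0 else 1
  | .cross _ _ _ => 0

lemma fZ1_le (k : Fin L) (i j : Fin r) (e : {e : Edg L r // validEdge Z e = true}) :
    fZ1 k i j e.1 ≤ 1 := by
  rcases e with ⟨e0, h⟩; cases e0 <;> simp [fZ1] <;> split <;> simp

lemma fZ0_le (i j : Fin r) (e : {e : Edg L r // validEdge Z e = true}) :
    fZ0 i j e.1 ≤ 1 := by
  rcases e with ⟨e0, h⟩; cases e0 <;> simp [fZ0] <;> split <;> simp

lemma fZ1_conserves (k : Fin L) (i j : Fin r) (hz : Z k i j = true) :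
    (matrixGraph Z).Conserves Vtx.s Vtx.t (fun e => fZ1 k i j e.1) := by
  intro v hvs hvt
  cases v with
  | s => exact absurd rfl hvs
  | t => exact absurd rfl hvt
  | x a i' =>
    rw [sum_tgt Z (Vtx.x a i') (fZ1 k i j), sum_src Z (Vtx.x a i') (fZ1 k i j)]
    simp [fZ1, ite_and]
    have hc := sum3_single (fun (x : Fin L) (x_1 x_2 : Fin r) =>
      if Z x x_1 x_2 = true then
        if x = a then if x_1 = i' then if x = k then if x_1 = i then if x_2 = j then (1:ℕ) else 0
          else 0 else 0 else 0 else 0 else 0) k i j (by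
        intro m i1 j1 hne
        split_ifs with h1 h2 h3 h4 h5 h6 <;> try rfl
        exact absurd ⟨h4, h5, h6⟩ hne)
    rw [hc]
    simp only [hz, if_true]
    split_ifs <;> first | omega | fin_omega
  | y a j' =>
    rw [sum_tgt Z (Vtx.y a j') (fZ1 k i j), sum_src Z (Vtx.y a j') (fZ1 k i j)]
    simp [fZ1, ite_and]
    have hc := sum3_single (fun (x : Fin L) (x_1 x_2 : Fin r) =>
      if Z x x_1 x_2 = true then
        if x = a then if x_2 = j' then if x = k then if x_1 = i then if x_2 = j then (1:ℕ) else 0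
          else 0 else 0 else 0 else 0 else 0) k i j (by
        intro m i1 j1 hne
        split_ifs with h1 h2 h3 h4 h5 h6 <;> try rfl
        exact absurd ⟨h4, h5, h6⟩ hne)
    rw [hc]
    simp only [hz, if_true]
    split_ifs <;> first | omega | fin_omega

lemma fZ0_conserves (i j : Fin r) :
    (matrixGraph Z).Conserves Vtx.s Vtx.t (fun e => fZ0 i j e.1) := by
  intro v hvs hvt
  cases v with
  | s => exact absurd rfl hvs
  | t => exact absurd rfl hvt
  | x a i' =>
    rw [sum_tgt Z (Vtx.x a i') (fZ0 i j), sum_src Z (Vtx.x a i') (fZ0 i j)]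
    simp [fZ0, ite_and]
  | y a j' =>
    rw [sum_tgt Z (Vtx.y a j') (fZ0 i j), sum_src Z (Vtx.y a j') (fZ0 i j)]
    simp [fZ0, ite_and]

lemma fZ0_value (i j : Fin r) (hr : 1 ≤ r) :
    (matrixGraph Z).flowValue Vtx.s (fun e => fZ0 i j e.1) = 2 * r - 2 := by
  unfold Digraph'.flowValue
  rw [sum_src Z Vtx.s (fun e0 => ((fZ0 i j e0 : ℕ) : ℤ)),
    sum_tgt Z Vtx.s (fun e0 => ((fZ0 i j e0 : ℕ) : ℤ))]
  simp [fZ0, ite_and]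
  rw [sum_ite_ne i, sum_ite_ne j]
  ring

lemma fZ1_value (k : Fin L) (i j : Fin r) (hz : Z k i j = true) (hr : 1 ≤ r) :
    (matrixGraph Z).flowValue Vtx.s (fun e => fZ1 k i j e.1) = 2 * r - 1 := by
  unfold Digraph'.flowValue
  rw [sum_src Z Vtx.s (fun e0 => ((fZ1 k i j e0 : ℕ) : ℤ)),
    sum_tgt Z Vtx.s (fun e0 => ((fZ1 k i j e0 : ℕ) : ℤ))]
  simp [fZ1, ite_and]
  rw [sum_ite_ne j]
  ring


/-- The source-side indicator for the trivial cut at `s`. -/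
def sCut : Vtx L r → Bool := fun v => match v with
  | .s => true
  | _ => false

@[simp] lemma sCut_eq_true {v : Vtx L r} : sCut v = true ↔ v = Vtx.s := by
  cases v <;> simp [sCut]

/-- The indicator of the source side of the cut used for part (ii). -/
def cutB (k : Fin L) (i j : Fin r) : Vtx L r → Bool := fun v => match v with
  | .s => true
  | .t => false
  | .x a i' => if i' = i then decide (a.val ≤ k.val) else decide (a.val < k.val)
  | .y a j' => if j' = j then decide (a.val < k.val) else decide (a.val ≤ k.val)

lemma cutB_xAt {k : Fin L} {i j v : Fin r} {m : ℕ} :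
    cutB k i j (xAt L r m v) = true ↔
      ((if v = i then m ≤ k.val + 1 else m ≤ k.val) ∧ m ≤ L) := by
  have hk := k.isLt
  unfold xAt
  split
  · rename_i h0
    subst h0
    simp [cutB]
    try split <;> omega
  · rename_i h0
    split
    · rename_i hlt
      simp only [cutB]
      split <;> simp <;> omega
    · rename_i hge
      simp [cutB]
      intro h
      try split at h <;> omega

lemma cutB_yAt {k : Fin L} {i j v : Fin r} {m : ℕ} :
    cutB k i j (yAt L r m v) = true ↔
      ((if v = j then m ≤ k.val else m ≤ k.val + 1) ∧ m ≤ L) := by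
  have hk := k.isLt
  unfold yAt
  split
  · rename_i h0
    subst h0
    simp [cutB]
    try split <;> omega
  · rename_i h0
    split
    · rename_i hlt
      simp only [cutB]
      split <;> simp <;> omega
    · rename_i hge
      simp [cutB]
      intro h
      try split at h <;> omega

@[simp] lemma cutB_t {k : Fin L} {i j : Fin r} : cutB k i j (Vtx.t (L := L) (r := r)) = false := rfl
@[simp] lemma cutB_x {k a : Fin L} {i j i' : Fin r} :
    cutB k i j (Vtx.x a i') = if i' = i then decide (a.val ≤ k.val) else decide (a.val < k.val) :=
  rfl
@[simp] lemma cutB_y {k a : Fin L} {i j j' : Fin r} :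
    cutB k i j (Vtx.y a j') = if j' = j then decide (a.val < k.val) else decide (a.val ≤ k.val) :=
  rfl

end Flows

/-- (i) The maximum `(s,t)`-flow value of `G(Z_1,…,Z_L)` is `2r`;
(ii) for every `k ∈ {1,…,L}` and `i,j ∈ {1,…,r}`, deleting the edges
`e₁ = (x_{k,i}, x_{k+1,i})` and `e₂ = (y_{k−1,j}, y_{k,j})` drops the maximum
`(s,t)`-flow value to `2r − 1` if `Z_k[i,j] = 1` and to `2r − 2` if `Z_k[i,j] = 0`.
(Here `k : Fin L` encodes the paper index `k+1`, so `e₁` is the `x`-path edge with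
index `k+1` and `e₂` the `y`-path edge with index `k`.) -/
theorem stmt4 (L r : ℕ) (hL : 1 ≤ L) (hr : 1 ≤ r)
    (Z : Fin L → Fin r → Fin r → Bool) :
    (matrixGraph Z).IsMaxFlowValue Vtx.s Vtx.t ∅ (2 * r) ∧
    ∀ (k : Fin L) (i j : Fin r),
      (matrixGraph Z).IsMaxFlowValue Vtx.s Vtx.t
        ({⟨Edg.ex k.succ i, rfl⟩, ⟨Edg.ey k.castSucc j, rfl⟩} :
          Finset {e : Edg L r // validEdge Z e = true})
        (if Z k i j then 2 * (r : ℤ) - 1 else 2 * (r : ℤ) - 2) := by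
  constructor
  · constructor
    · exact ⟨fun e => f1 e.1, ⟨f1_le Z, f1_conserves Z⟩, by simp, f1_value Z⟩
    · intro f hf hF
      refine le_trans (Digraph'.flow_le_cut (matrixGraph Z) Vtx.s Vtx.t f hf ∅ hF sCut rfl rfl
        ((univ.image fun i : Fin r =>
            (⟨Edg.ex 0 i, rfl⟩ : {e : Edg L r // validEdge Z e = true})) ∪
         (univ.image fun i : Fin r => ⟨Edg.ey 0 i, rfl⟩)) ?_) ?_
      · intro e h1 h2 _
        obtain ⟨e0, hv⟩ := e
        cases e0 with
        | ex m i'' =>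
          simp only [mg_src] at h1
          simp [src0] at h1
          subst h1
          exact Finset.mem_union_left _ (Finset.mem_image.mpr ⟨i'', Finset.mem_univ _, rfl⟩)
        | ey m i'' =>
          simp only [mg_src] at h1
          simp [src0] at h1
          subst h1
          exact Finset.mem_union_right _ (Finset.mem_image.mpr ⟨i'', Finset.mem_univ _, rfl⟩)
        | cross a i'' j'' =>
          simp only [mg_src] at h1
          simp [src0] at h1
      · have hc : ((univ.image fun i : Fin r =>
            (⟨Edg.ex 0 i, rfl⟩ : {e : Edg L r // validEdge Z e = true})) ∪
            (univ.image fun i : Fin r => ⟨Edg.ey 0 i, rfl⟩)).card ≤ 2 * r := by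
          refine le_trans (Finset.card_union_le _ _) ?_
          have h1 := Finset.card_image_le (s := (univ : Finset (Fin r)))
            (f := fun i : Fin r => (⟨Edg.ex 0 i, rfl⟩ : {e : Edg L r // validEdge Z e = true}))
          have h2 := Finset.card_image_le (s := (univ : Finset (Fin r)))
            (f := fun i : Fin r => (⟨Edg.ey 0 i, rfl⟩ : {e : Edg L r // validEdge Z e = true}))
          simp only [Finset.card_univ, Fintype.card_fin] at h1 h2
          omega
        omega
  · intro k i j
    have hkL := k.isLt
    by_cases hz : Z k i j = true
    · rw [if_pos hz]
      constructor
      · refine ⟨fun e => fZ1 k i j e.1, ⟨fZ1_le Z k i j, fZ1_conserves Z k i j hz⟩, ?_,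
          fZ1_value Z k i j hz hr⟩
        intro e he
        simp only [Finset.mem_insert, Finset.mem_singleton] at he
        rcases he with rfl | rfl <;> simp [fZ1]
      · intro f hf hF
        refine le_trans (Digraph'.flow_le_cut (matrixGraph Z) Vtx.s Vtx.t f hf _ hF
          (cutB k i j) rfl rfl
          ((((univ.erase i).image fun i' =>
              (⟨Edg.ex k.castSucc i', rfl⟩ : {e : Edg L r // validEdge Z e = true})) ∪
            ((univ.erase j).image fun j' => ⟨Edg.ey k.succ j', rfl⟩)) ∪
            {⟨Edg.cross k i j, hz⟩}) ?_) ?_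
        · intro e h1 h2 h3
          obtain ⟨e0, hv⟩ := e
          cases e0 with
          | ex m i'' =>
            simp only [mg_src] at h1
            simp only [mg_tgt] at h2
            simp only [src0] at h1
            simp only [tgt0] at h2
            rw [cutB_xAt] at h1
            have h2' : ¬ (cutB k i j (xAt L r (m.val + 1) i'') = true) := by simp [h2]
            rw [cutB_xAt] at h2'
            by_cases hii : i'' = i
            · rw [if_pos hii] at h1
              rw [if_pos hii] at h2'
              have hm : m.val = k.val + 1 := by omega
              have hmk : m = k.succ := Fin.ext (by simpa using hm)
              subst hii; subst hmk
              exact absurd (Finset.mem_insert_self _ _) h3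
            · rw [if_neg hii] at h1
              rw [if_neg hii] at h2'
              have hm : m.val = k.val := by omega
              have hmk : m = k.castSucc := Fin.ext (by simpa using hm)
              subst hmk
              refine Finset.mem_union_left _ (Finset.mem_union_left _
                (Finset.mem_image.mpr ⟨i'', Finset.mem_erase.mpr ⟨hii, Finset.mem_univ _⟩, rfl⟩))
          | ey m j'' =>
            simp only [mg_src] at h1
            simp only [mg_tgt] at h2
            simp only [src0] at h1
            simp only [tgt0] at h2
            rw [cutB_yAt] at h1
            have h2' : ¬ (cutB k i j (yAt L r (m.val + 1) j'') = true) := by simp [h2]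
            rw [cutB_yAt] at h2'
            by_cases hjj : j'' = j
            · rw [if_pos hjj] at h1
              rw [if_pos hjj] at h2'
              have hm : m.val = k.val := by omega
              have hmk : m = k.castSucc := Fin.ext (by simpa using hm)
              subst hjj; subst hmk
              exact absurd (Finset.mem_insert_of_mem (Finset.mem_singleton_self _)) h3
            · rw [if_neg hjj] at h1
              rw [if_neg hjj] at h2'
              have hm : m.val = k.val + 1 := by omega
              have hmk : m = k.succ := Fin.ext (by simpa using hm)
              subst hmk
              refine Finset.mem_union_left _ (Finset.mem_union_right _
                (Finset.mem_image.mpr ⟨j'', Finset.mem_erase.mpr ⟨hjj, Finset.mem_univ _⟩, rfl⟩))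
          | cross a i'' j'' =>
            simp only [mg_src] at h1
            simp only [mg_tgt] at h2
            simp only [src0] at h1
            simp only [tgt0] at h2
            rw [cutB_x] at h1
            rw [cutB_y] at h2
            by_cases hii : i'' = i <;> by_cases hjj : j'' = j <;>
              [rw [if_pos hii] at h1; rw [if_pos hii] at h1; rw [if_neg hii] at h1;
                rw [if_neg hii] at h1] <;>
              [rw [if_pos hjj] at h2; rw [if_neg hjj] at h2; rw [if_pos hjj] at h2;
                rw [if_neg hjj] at h2] <;>
              simp only [decide_eq_true_eq, decide_eq_false_iff_not] at h1 h2
            · have hak : a = k := Fin.ext (by omega)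
              subst hii; subst hjj; subst hak
              exact Finset.mem_union_right _ (Finset.mem_singleton_self _)
            · omega
            · omega
            · omega
        · have hc1 := Finset.card_image_le (s := (univ : Finset (Fin r)).erase i)
            (f := fun i' : Fin r =>
              (⟨Edg.ex k.castSucc i', rfl⟩ : {e : Edg L r // validEdge Z e = true}))
          have hc2 := Finset.card_image_le (s := (univ : Finset (Fin r)).erase j)
            (f := fun j' : Fin r =>
              (⟨Edg.ey k.succ j', rfl⟩ : {e : Edg L r // validEdge Z e = true}))
          have he1 : ((univ : Finset (Fin r)).erase i).card = r - 1 := by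
            rw [Finset.card_erase_of_mem (Finset.mem_univ _)]
            simp
          have he2 : ((univ : Finset (Fin r)).erase j).card = r - 1 := by
            rw [Finset.card_erase_of_mem (Finset.mem_univ _)]
            simp
          have hu1 := Finset.card_union_le
            (((univ : Finset (Fin r)).erase i).image fun i' =>
              (⟨Edg.ex k.castSucc i', rfl⟩ : {e : Edg L r // validEdge Z e = true}))
            (((univ : Finset (Fin r)).erase j).image fun j' => ⟨Edg.ey k.succ j', rfl⟩)
          have hu2 := Finset.card_union_le
            (((((univ : Finset (Fin r)).erase i).image fun i' =>
              (⟨Edg.ex k.castSucc i', rfl⟩ : {e : Edg L r // validEdge Z e = true})) ∪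
              (((univ : Finset (Fin r)).erase j).image fun j' => ⟨Edg.ey k.succ j', rfl⟩)))
            ({⟨Edg.cross k i j, hz⟩} : Finset {e : Edg L r // validEdge Z e = true})
          simp only [Finset.card_singleton] at hu2
          omega
    · rw [if_neg hz]
      constructor
      · refine ⟨fun e => fZ0 i j e.1, ⟨fZ0_le Z i j, fZ0_conserves Z i j⟩, ?_,
          fZ0_value Z i j hr⟩
        intro e he
        simp only [Finset.mem_insert, Finset.mem_singleton] at he
        rcases he with rfl | rfl <;> simp [fZ0]
      · intro f hf hF
        refine le_trans (Digraph'.flow_le_cut (matrixGraph Z) Vtx.s Vtx.t f hf _ hF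
          (cutB k i j) rfl rfl
          ((((univ.erase i).image fun i' =>
              (⟨Edg.ex k.castSucc i', rfl⟩ : {e : Edg L r // validEdge Z e = true})) ∪
            ((univ.erase j).image fun j' => ⟨Edg.ey k.succ j', rfl⟩))) ?_) ?_
        · intro e h1 h2 h3
          obtain ⟨e0, hv⟩ := e
          cases e0 with
          | ex m i'' =>
            simp only [mg_src] at h1
            simp only [mg_tgt] at h2
            simp only [src0] at h1
            simp only [tgt0] at h2
            rw [cutB_xAt] at h1
            have h2' : ¬ (cutB k i j (xAt L r (m.val + 1) i'') = true) := by simp [h2]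
            rw [cutB_xAt] at h2'
            by_cases hii : i'' = i
            · rw [if_pos hii] at h1
              rw [if_pos hii] at h2'
              have hm : m.val = k.val + 1 := by omega
              have hmk : m = k.succ := Fin.ext (by simpa using hm)
              subst hii; subst hmk
              exact absurd (Finset.mem_insert_self _ _) h3
            · rw [if_neg hii] at h1
              rw [if_neg hii] at h2'
              have hm : m.val = k.val := by omega
              have hmk : m = k.castSucc := Fin.ext (by simpa using hm)
              subst hmk
              exact Finset.mem_union_left _
                (Finset.mem_image.mpr ⟨i'', Finset.mem_erase.mpr ⟨hii, Finset.mem_univ _⟩, rfl⟩)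
          | ey m j'' =>
            simp only [mg_src] at h1
            simp only [mg_tgt] at h2
            simp only [src0] at h1
            simp only [tgt0] at h2
            rw [cutB_yAt] at h1
            have h2' : ¬ (cutB k i j (yAt L r (m.val + 1) j'') = true) := by simp [h2]
            rw [cutB_yAt] at h2'
            by_cases hjj : j'' = j
            · rw [if_pos hjj] at h1
              rw [if_pos hjj] at h2'
              have hm : m.val = k.val := by omega
              have hmk : m = k.castSucc := Fin.ext (by simpa using hm)
              subst hjj; subst hmk
              exact absurd (Finset.mem_insert_of_mem (Finset.mem_singleton_self _)) h3
            · rw [if_neg hjj] at h1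
              rw [if_neg hjj] at h2'
              have hm : m.val = k.val + 1 := by omega
              have hmk : m = k.succ := Fin.ext (by simpa using hm)
              subst hmk
              exact Finset.mem_union_right _
                (Finset.mem_image.mpr ⟨j'', Finset.mem_erase.mpr ⟨hjj, Finset.mem_univ _⟩, rfl⟩)
          | cross a i'' j'' =>
            simp only [mg_src] at h1
            simp only [mg_tgt] at h2
            simp only [src0] at h1
            simp only [tgt0] at h2
            rw [cutB_x] at h1
            rw [cutB_y] at h2
            by_cases hii : i'' = i <;> by_cases hjj : j'' = j <;>
              [rw [if_pos hii] at h1; rw [if_pos hii] at h1; rw [if_neg hii] at h1;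
                rw [if_neg hii] at h1] <;>
              [rw [if_pos hjj] at h2; rw [if_neg hjj] at h2; rw [if_pos hjj] at h2;
                rw [if_neg hjj] at h2] <;>
              simp only [decide_eq_true_eq, decide_eq_false_iff_not] at h1 h2
            · have hak : a = k := Fin.ext (by omega)
              subst hii; subst hjj; subst hak
              exact absurd hv (by simpa [validEdge] using hz)
            · omega
            · omega
            · omega
        · have hc1 := Finset.card_image_le (s := (univ : Finset (Fin r)).erase i)
            (f := fun i' : Fin r =>
              (⟨Edg.ex k.castSucc i', rfl⟩ : {e : Edg L r // validEdge Z e = true}))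
          have hc2 := Finset.card_image_le (s := (univ : Finset (Fin r)).erase j)
            (f := fun j' : Fin r =>
              (⟨Edg.ey k.succ j', rfl⟩ : {e : Edg L r // validEdge Z e = true}))
          have he1 : ((univ : Finset (Fin r)).erase i).card = r - 1 := by
            rw [Finset.card_erase_of_mem (Finset.mem_univ _)]
            simp
          have he2 : ((univ : Finset (Fin r)).erase j).card = r - 1 := by
            rw [Finset.card_erase_of_mem (Finset.mem_univ _)]
            simp
          have hu1 := Finset.card_union_le
            (((univ : Finset (Fin r)).erase i).image fun i' =>
              (⟨Edg.ex k.castSucc i', rfl⟩ : {e : Edg L r // validEdge Z e = true}))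
            (((univ : Finset (Fin r)).erase j).image fun j' => ⟨Edg.ey k.succ j', rfl⟩)
          omega
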